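/- Let X be a nonnegative random variable whose Laplace transform satisfies E[e^{-u X}] = e^{-T φ(u)} for all u > 0, where T > 0 and φ : (0,∞) → [0,∞) is measurable. Then for every t > 0, P(X ≥ t) ≤ 2 ∫₀^∞ (1 - e^{-T φ(u/t)}) e^{-u} du ≤ 2T ∫₀^∞ φ(u/t) e^{-u} du. -/

import Mathlib

open MeasureTheory Set Real
open scoped ENNReal

lemma aux_exp_int {b : ℝ} (hb : 0 < b) :
    ∫ u in Set.Ioi (0:ℝ), Real.exp (-b * u) = b⁻¹ := by
  have h := integral_comp_mul_left_Ioi (fun y => Real.exp (-y)) 0 hb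
  simp only [mul_zero, integral_exp_neg_Ioi, neg_zero, Real.exp_zero, smul_eq_mul,
    mul_one] at h
  rw [← h]
  congr 1
  ext u
  ring_nf

lemma aux_key {t x : ℝ} (ht : 0 < t) (hx : 0 ≤ x) :
    ∫ u in Set.Ioi (0:ℝ), (1 - Real.exp (-(u / t) * x)) * Real.exp (-u)
      = x / (x + t) := by
  have hxt : 0 < 1 + x / t := by positivity
  have hfe : ∀ u : ℝ, (1 - Real.exp (-(u / t) * x)) * Real.exp (-u)
      = Real.exp (-1 * u) - Real.exp (-(1 + x / t) * u) := by
    intro u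
    rw [sub_mul, one_mul, ← Real.exp_add]
    ring_nf
  rw [MeasureTheory.integral_congr_ae (Filter.Eventually.of_forall fun u => hfe u)]
  rw [MeasureTheory.integral_sub (exp_neg_integrableOn_Ioi 0 one_pos)
    (exp_neg_integrableOn_Ioi 0 hxt)]
  rw [aux_exp_int one_pos, aux_exp_int hxt]
  have ht' : t ≠ 0 := ht.ne'
  have hxt' : x + t ≠ 0 := by positivity
  field_simp
  ring

set_option maxHeartbeats 1000000 in
theorem tail_bound_via_laplace {Ω : Type*} [MeasurableSpace Ω] (P : Measure Ω)
    [IsProbabilityMeasure P] (X : Ω → ℝ) (hX : Measurable X) (hX0 : ∀ ω, 0 ≤ X ω)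
    (T : ℝ) (hT : 0 < T) (φ : ℝ → ℝ) (hφm : Measurable φ) (hφ0 : ∀ u > 0, 0 ≤ φ u)
    (hlap : ∀ u > 0, ∫ ω, Real.exp (-u * X ω) ∂P = Real.exp (-T * φ u)) :
    ∀ t > 0,
      P {ω | t ≤ X ω}
          ≤ 2 * ∫⁻ u in Set.Ioi (0:ℝ),
              ENNReal.ofReal ((1 - Real.exp (-T * φ (u / t))) * Real.exp (-u)) ∧
      2 * (∫⁻ u in Set.Ioi (0:ℝ),
              ENNReal.ofReal ((1 - Real.exp (-T * φ (u / t))) * Real.exp (-u)))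
          ≤ ENNReal.ofReal (2 * T) *
              ∫⁻ u in Set.Ioi (0:ℝ), ENNReal.ofReal (φ (u / t) * Real.exp (-u)) := by
  intro t ht
  constructor
  · -- first inequality
    have hEq : ∫⁻ ω, ENNReal.ofReal (X ω / (X ω + t)) ∂P
        = ∫⁻ u in Set.Ioi (0:ℝ),
            ENNReal.ofReal ((1 - Real.exp (-T * φ (u / t))) * Real.exp (-u)) := by
      have step1 : ∀ ω, ENNReal.ofReal (X ω / (X ω + t))
          = ∫⁻ u in Set.Ioi (0:ℝ),
              ENNReal.ofReal ((1 - Real.exp (-(u / t) * X ω)) * Real.exp (-u)) := by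
        intro ω
        rw [← aux_key ht (hX0 ω)]
        refine (MeasureTheory.ofReal_integral_eq_lintegral_ofReal ?_ ?_)
        · -- integrability
          refine MeasureTheory.Integrable.mono' (exp_neg_integrableOn_Ioi 0 one_pos)
            ?_ ?_
          · exact (((measurable_const.sub
              (((measurable_id.div_const t).neg.mul_const (X ω)).exp)).mul
              measurable_id.neg.exp).aestronglyMeasurable)
          · filter_upwards [ae_restrict_mem measurableSet_Ioi] with u hu
            have hu' : (0:ℝ) < u := hu
            have h1 : 0 ≤ (u / t) * X ω := by
              have := hX0 ω; positivity
            have h2 : Real.exp (-(u / t) * X ω) ≤ 1 := by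
              rw [Real.exp_le_one_iff]; linarith
            have h3 : 0 ≤ 1 - Real.exp (-(u / t) * X ω) := by linarith
            rw [Real.norm_eq_abs, abs_of_nonneg (mul_nonneg h3 (Real.exp_pos _).le)]
            have h4 : (1 - Real.exp (-(u / t) * X ω)) ≤ 1 := by
              have := Real.exp_pos (-(u / t) * X ω); linarith
            calc (1 - Real.exp (-(u / t) * X ω)) * Real.exp (-u)
                ≤ 1 * Real.exp (-u) :=
                  mul_le_mul_of_nonneg_right h4 (Real.exp_pos _).le
              _ = Real.exp (-1 * u) := by rw [one_mul, neg_one_mul]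
        · filter_upwards [ae_restrict_mem measurableSet_Ioi] with u hu
          have hu' : (0:ℝ) < u := hu
          have h1 : 0 ≤ (u / t) * X ω := by
            have := hX0 ω; positivity
          have h2 : Real.exp (-(u / t) * X ω) ≤ 1 := by
            rw [Real.exp_le_one_iff]; linarith
          have h3 : 0 ≤ 1 - Real.exp (-(u / t) * X ω) := by linarith
          exact mul_nonneg h3 (Real.exp_pos _).le
      calc ∫⁻ ω, ENNReal.ofReal (X ω / (X ω + t)) ∂P
          = ∫⁻ ω, (∫⁻ u in Set.Ioi (0:ℝ),
              ENNReal.ofReal ((1 - Real.exp (-(u / t) * X ω)) * Real.exp (-u))) ∂P := by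
            simp_rw [step1]
        _ = ∫⁻ u in Set.Ioi (0:ℝ), (∫⁻ ω,
              ENNReal.ofReal ((1 - Real.exp (-(u / t) * X ω)) * Real.exp (-u)) ∂P) := by
            refine MeasureTheory.lintegral_lintegral_swap ?_
            refine Measurable.aemeasurable (Measurable.ennreal_ofReal ?_)
            have h1 : Measurable fun p : Ω × ℝ => Real.exp (-(p.2 / t) * X p.1) :=
              (((measurable_snd.div_const t).neg.mul (hX.comp measurable_fst)).exp)
            exact ((measurable_const.sub h1).mul measurable_snd.neg.exp)
        _ = ∫⁻ u in Set.Ioi (0:ℝ),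
              ENNReal.ofReal ((1 - Real.exp (-T * φ (u / t))) * Real.exp (-u)) := by
            refine MeasureTheory.setLIntegral_congr_fun measurableSet_Ioi
              (fun u hu => ?_)
            have hut : 0 < u / t := div_pos hu ht
            have hint : Integrable (fun ω => Real.exp (-(u / t) * X ω)) P := by
              refine MeasureTheory.Integrable.mono' (integrable_const 1)
                (((hX.const_mul (-(u/t))).exp).aestronglyMeasurable) ?_
              filter_upwards with ω
              rw [Real.norm_eq_abs, abs_of_nonneg (Real.exp_pos _).le,
                Real.exp_le_one_iff]
              have := hX0 ω
              nlinarith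
            have hint2 : Integrable (fun ω => (1 - Real.exp (-(u / t) * X ω))
                * Real.exp (-u)) P := ((integrable_const 1).sub hint).mul_const _
            have hnn : 0 ≤ᵐ[P] fun ω => (1 - Real.exp (-(u / t) * X ω))
                * Real.exp (-u) := by
              filter_upwards with ω
              have h1 : 0 ≤ (u / t) * X ω := by
                have := hX0 ω; positivity
              have h2 : Real.exp (-(u / t) * X ω) ≤ 1 := by
                rw [Real.exp_le_one_iff]; linarith
              have h3 : 0 ≤ 1 - Real.exp (-(u / t) * X ω) := by linarith
              exact mul_nonneg h3 (Real.exp_pos _).le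
            rw [← MeasureTheory.ofReal_integral_eq_lintegral_ofReal hint2 hnn]
            congr 1
            rw [MeasureTheory.integral_mul_const,
              MeasureTheory.integral_sub (integrable_const 1) hint,
              MeasureTheory.integral_const, hlap (u / t) hut]
            simp
    rw [← hEq]
    have hg : Measurable fun ω => ENNReal.ofReal (X ω / (X ω + t)) :=
      (hX.div (hX.add measurable_const)).ennreal_ofReal
    calc P {ω | t ≤ X ω} = ∫⁻ _ in {ω | t ≤ X ω}, 1 ∂P := (setLIntegral_one _).symm
      _ ≤ ∫⁻ ω in {ω | t ≤ X ω}, 2 * ENNReal.ofReal (X ω / (X ω + t)) ∂P := by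
          refine MeasureTheory.setLIntegral_mono (hg.const_mul 2) fun ω hω => ?_
          have hω' : t ≤ X ω := hω
          have hx0 := hX0 ω
          have hreal : (1:ℝ) ≤ 2 * (X ω / (X ω + t)) := by
            rw [mul_div_assoc', le_div_iff₀ (by positivity)]
            linarith
          have h2 : (2:ℝ≥0∞) * ENNReal.ofReal (X ω / (X ω + t))
              = ENNReal.ofReal (2 * (X ω / (X ω + t))) := by
            rw [ENNReal.ofReal_mul (by norm_num : (0:ℝ) ≤ 2), ENNReal.ofReal_ofNat]
          rw [h2]
          exact ENNReal.one_le_ofReal.mpr hreal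
      _ ≤ ∫⁻ ω, 2 * ENNReal.ofReal (X ω / (X ω + t)) ∂P :=
          MeasureTheory.setLIntegral_le_lintegral _ _
      _ = 2 * ∫⁻ ω, ENNReal.ofReal (X ω / (X ω + t)) ∂P :=
          MeasureTheory.lintegral_const_mul 2 hg
  · -- second inequality
    have hmeas2 : Measurable fun u : ℝ => ENNReal.ofReal (φ (u / t) * Real.exp (-u)) :=
      ((hφm.comp (measurable_id.div_const t)).mul measurable_id.neg.exp).ennreal_ofReal
    have h2T : ENNReal.ofReal (2 * T) = 2 * ENNReal.ofReal T := by
      rw [ENNReal.ofReal_mul (by norm_num : (0:ℝ) ≤ 2), ENNReal.ofReal_ofNat]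
    rw [h2T, mul_assoc, ← MeasureTheory.lintegral_const_mul (ENNReal.ofReal T) hmeas2]
    refine mul_le_mul_right ?_ 2
    refine MeasureTheory.setLIntegral_mono (hmeas2.const_mul _) fun u hu => ?_
    have hut : 0 < u / t := div_pos hu ht
    have hφnn := hφ0 (u / t) hut
    rw [← ENNReal.ofReal_mul hT.le]
    refine ENNReal.ofReal_le_ofReal ?_
    have h1 : 1 - Real.exp (-T * φ (u / t)) ≤ T * φ (u / t) := by
      have := Real.add_one_le_exp (-T * φ (u / t))
      linarith
    calc (1 - Real.exp (-T * φ (u / t))) * Real.exp (-u)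
        ≤ (T * φ (u / t)) * Real.exp (-u) :=
          mul_le_mul_of_nonneg_right h1 (Real.exp_pos _).le
      _ = T * (φ (u / t) * Real.exp (-u)) := by ring
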